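/- The single-target reduction preserves validity for node targets: given a graph G and a node shape s with constraint φ and finite target set {n_1, ..., n_m} ⊆ N, extend G to G' by adding a fresh node n_0 and fresh edges e_1, ..., e_m with ρ(e_j) = (n_0, n_j), each labelled with a fresh label l_j, and replace s's target with ⊥ while adding a shape s_0 with constraint ≥_1 l_1.φ ∧ ... ∧ ≥_1 l_m.φ targeting exactly n_0. Then G conforms to {s} if and only if G' conforms to {s with target ⊥, s_0}, provided φ does not mention the fresh labels or the fresh node. -/

import Mathlib

/-- A property graph (restricted to the components relevant for path semantics):
edges have a source node, a destination node, and a set of labels. -/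
structure PGraph (Node Edge Lab : Type*) where
  src : Edge → Node
  dst : Edge → Node
  eLab : Edge → Set Lab

/-- ProGS path expressions: p ::= l_E | p⁻ | p₁/p₂ | p₁ || p₂ | p* | p+ | ?p -/
inductive PathExpr (Lab : Type*) where
  | lbl (l : Lab)
  | inv (p : PathExpr Lab)
  | seq (p₁ p₂ : PathExpr Lab)
  | alt (p₁ p₂ : PathExpr Lab)
  | star (p : PathExpr Lab)
  | plus (p : PathExpr Lab)
  | opt (p : PathExpr Lab)

/-- Path semantics: `PathSem G p n n'` means `n' ∈ ⟦p⟧^G_n`.  The clauses for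
`p+` (and hence `p*`) realize the least-fixed-point reading of the recursive
definition ⟦p+⟧_n = ⟦p⟧_n ∪ ⟦p/p+⟧_n (and ∅ if ⟦p⟧_n = ∅). -/
inductive PathSem {Node Edge Lab : Type*} (G : PGraph Node Edge Lab) :
    PathExpr Lab → Node → Node → Prop where
  | lbl {l : Lab} {e : Edge} {n n' : Node} :
      G.src e = n → G.dst e = n' → l ∈ G.eLab e → PathSem G (.lbl l) n n'
  | inv {p n n'} : PathSem G p n' n → PathSem G (.inv p) n n'
  | seq {p₁ p₂ n m n'} :
      PathSem G p₁ n m → PathSem G p₂ m n' → PathSem G (.seq p₁ p₂) n n'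
  | altL {p₁ p₂ n n'} : PathSem G p₁ n n' → PathSem G (.alt p₁ p₂) n n'
  | altR {p₁ p₂ n n'} : PathSem G p₂ n n' → PathSem G (.alt p₁ p₂) n n'
  | plusOne {p n n'} : PathSem G p n n' → PathSem G (.plus p) n n'
  | plusStep {p n m n'} :
      PathSem G p n m → PathSem G (.plus p) m n' → PathSem G (.plus p) n n'
  | starRefl {p n} : PathSem G (.star p) n n
  | starPlus {p n n'} : PathSem G (.plus p) n n' → PathSem G (.star p) n n'
  | optRefl {p n} : PathSem G (.opt p) n n
  | optOne {p n n'} : PathSem G p n n' → PathSem G (.opt p) n n'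

open Classical

/-- Node constraints with qualified number restrictions over paths:
φ_N ::= ⊤ | s_N | n | l_N | ¬φ | φ₁ ∧ φ₂ | ≥_i p.φ. -/
inductive NCq (SN Lab Node : Type*) where
  | top
  | shape (s : SN)
  | nid (n : Node)
  | lab (l : Lab)
  | neg (φ : NCq SN Lab Node)
  | and (φ₁ φ₂ : NCq SN Lab Node)
  | geq (i : ℕ) (p : PathExpr Lab) (φ : NCq SN Lab Node)

/-- Three-valued evaluation (values 0, 1/2, 1) of node constraints:
⟦≥_i p.φ⟧_n is 1 if at least i nodes reachable via p satisfy φ with value 1,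
0 if |⟦p⟧_n| − |{n₂ ∈ ⟦p⟧_n : ⟦φ⟧_{n₂} = 0}| < i, and 1/2 otherwise. -/
noncomputable def evalN {SN Lab Node Edge : Type*} (G : PGraph Node Edge Lab)
    (nlab : Node → Set Lab) (A : SN → Node → ℚ) :
    NCq SN Lab Node → Node → ℚ
  | .top, _ => 1
  | .shape s, n => A s n
  | .nid n', n => if n' = n then 1 else 0
  | .lab l, n => if l ∈ nlab n then 1 else 0
  | .neg φ, n => 1 - evalN G nlab A φ n
  | .and φ₁ φ₂, n => min (evalN G nlab A φ₁ n) (evalN G nlab A φ₂ n)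
  | .geq i p φ, n =>
      if i ≤ {n₂ | PathSem G p n n₂ ∧ evalN G nlab A φ n₂ = 1}.ncard then 1
      else if {n₂ | PathSem G p n n₂}.ncard -
          {n₂ | PathSem G p n n₂ ∧ evalN G nlab A φ n₂ = 0}.ncard < i then 0
      else 1/2

/-- Relabelling of path expressions. -/
def mapPath {Lab Lab' : Type*} (fl : Lab → Lab') : PathExpr Lab → PathExpr Lab'
  | .lbl l => .lbl (fl l)
  | .inv p => .inv (mapPath fl p)
  | .seq p₁ p₂ => .seq (mapPath fl p₁) (mapPath fl p₂)
  | .alt p₁ p₂ => .alt (mapPath fl p₁) (mapPath fl p₂)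
  | .star p => .star (mapPath fl p)
  | .plus p => .plus (mapPath fl p)
  | .opt p => .opt (mapPath fl p)

/-- Renaming of shape names, node identities and labels in a node constraint.
A constraint in the image of `mapNCq` mentions no fresh labels and no fresh
node identities. -/
def mapNCq {SN SN' Lab Lab' Node Node' : Type*} (fs : SN → SN') (fn : Node → Node')
    (fl : Lab → Lab') : NCq SN Lab Node → NCq SN' Lab' Node'
  | .top => .top
  | .shape s => .shape (fs s)
  | .nid n => .nid (fn n)
  | .lab l => .lab (fl l)
  | .neg φ => .neg (mapNCq fs fn fl φ)
  | .and φ₁ φ₂ => .and (mapNCq fs fn fl φ₁) (mapNCq fs fn fl φ₂)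
  | .geq i p φ => .geq i (mapPath fl p) (mapNCq fs fn fl φ)

/-- The extended graph G' of the single-target reduction: a fresh node `none`
and, for each of the m targets t j, a fresh edge (inr j) from `none` to
`some (t j)` carrying only the fresh label (inr j); original nodes, edges and
labels are embedded via `some` and `inl`. -/
def extGraph {Node Edge Lab : Type*} (G : PGraph Node Edge Lab) {m : ℕ}
    (t : Fin m → Node) : PGraph (Option Node) (Edge ⊕ Fin m) (Lab ⊕ Fin m) where
  src := Sum.elim (fun e => some (G.src e)) (fun _ => none)
  dst := Sum.elim (fun e => some (G.dst e)) (fun j => some (t j))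
  eLab := Sum.elim (fun e => Sum.inl '' G.eLab e) (fun j => {Sum.inr j})

/-- The fresh node `none` carries no labels; original node labels are embedded. -/
def extNlab {Node Lab : Type*} (nlab : Node → Set Lab) (m : ℕ) :
    Option Node → Set (Lab ⊕ Fin m)
  | none => ∅
  | some n => Sum.inl '' nlab n

/-- The constraint φ transported to the extended graph (shape name s becomes
`false`, s₀ is `true`); it mentions neither the fresh node nor fresh labels. -/
def extCon {Node Lab : Type*} (φ : NCq Unit Lab Node) (m : ℕ) :
    NCq Bool (Lab ⊕ Fin m) (Option Node) :=
  mapNCq (fun _ => false) some Sum.inl φ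

/-- The constraint of the fresh shape s₀: ≥₁ l₁.φ ∧ … ∧ ≥₁ l_m.φ. -/
def s0Con {Node Lab : Type*} (φ : NCq Unit Lab Node) (m : ℕ) :
    NCq Bool (Lab ⊕ Fin m) (Option Node) :=
  (List.ofFn fun j : Fin m =>
    NCq.geq 1 (PathExpr.lbl (Sum.inr j)) (extCon φ m)).foldr NCq.and NCq.top

/-- The shape system of the reduced problem: shape `false` is the original
shape s, now with target ⊥ (hence no target condition), and shape `true` is
s₀, targeting exactly the fresh node `none`. -/
def extShapes {Node Lab : Type*} (φ : NCq Unit Lab Node) (m : ℕ) :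
    Bool → NCq Bool (Lab ⊕ Fin m) (Option Node) :=
  fun b => if b then s0Con φ m else extCon φ m

/-! ### Auxiliary lemmas for the single-target reduction -/

section Aux

variable {Node Edge Lab : Type*} {G : PGraph Node Edge Lab} {m : ℕ} {t : Fin m → Node}

lemma mem_T_cases {x : ℚ} (h : x ∈ ({0, 1/2, 1} : Set ℚ)) : x = 0 ∨ x = 1/2 ∨ x = 1 := by
  simpa [Set.mem_insert_iff] using h

lemma T_nonneg {x : ℚ} (h : x ∈ ({0, 1/2, 1} : Set ℚ)) : 0 ≤ x := by
  rcases mem_T_cases h with rfl | rfl | rfl <;> norm_num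

/-- Three-valued evaluation stays in {0, 1/2, 1}. -/
lemma evalN_mem_T {SN N E L : Type*} (G' : PGraph N E L) (nl : N → Set L)
    (A : SN → N → ℚ) (hA : ∀ s x, A s x ∈ ({0, 1/2, 1} : Set ℚ)) :
    ∀ (ψ : NCq SN L N) (x : N), evalN G' nl A ψ x ∈ ({0, 1/2, 1} : Set ℚ) := by
  intro ψ
  induction ψ with
  | top => intro x; simp [evalN]
  | shape s => intro x; simpa [evalN] using hA s x
  | nid n => intro x; by_cases h : n = x <;> simp [evalN, h]
  | lab l => intro x; by_cases h : l ∈ nl x <;> simp [evalN, h]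
  | neg ψ ih =>
      intro x
      rcases mem_T_cases (ih x) with h | h | h <;>
        simp only [evalN, h] <;> norm_num
  | and ψ₁ ψ₂ ih₁ ih₂ =>
      intro x
      simp only [evalN]
      rcases min_choice (evalN G' nl A ψ₁ x) (evalN G' nl A ψ₂ x) with h | h <;> rw [h]
      · exact ih₁ x
      · exact ih₂ x
  | geq i p ψ ih =>
      intro x
      simp only [evalN]
      split_ifs <;> simp

/-- Full congruence of evaluation in the assignment. -/
lemma evalN_congr {SN N E L : Type*} (G' : PGraph N E L) (nl : N → Set L)
    (A₁ A₂ : SN → N → ℚ) (h : ∀ s x, A₁ s x = A₂ s x) :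
    ∀ (ψ : NCq SN L N) (x : N), evalN G' nl A₁ ψ x = evalN G' nl A₂ ψ x := by
  intro ψ
  induction ψ with
  | top => intro x; simp [evalN]
  | shape s => intro x; simpa [evalN] using h s x
  | nid n => intro x; simp [evalN]
  | lab l => intro x; simp [evalN]
  | neg ψ ih => intro x; simp only [evalN, ih]
  | and ψ₁ ψ₂ ih₁ ih₂ => intro x; simp only [evalN, ih₁, ih₂]
  | geq i p ψ ih => intro x; simp only [evalN, ih]

/-- Congruence for constraints in the image of `mapNCq`: evaluation only
depends on the assignment at shapes in the image of `fs`. -/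
lemma evalN_congr_map {SN SN' N N' E L L' : Type*} (G' : PGraph N' E L')
    (nl : N' → Set L') (fs : SN → SN') (fn : N → N') (fl : L → L')
    (A₁ A₂ : SN' → N' → ℚ) (h : ∀ s x, A₁ (fs s) x = A₂ (fs s) x) :
    ∀ (ψ : NCq SN L N) (x : N'),
      evalN G' nl A₁ (mapNCq fs fn fl ψ) x = evalN G' nl A₂ (mapNCq fs fn fl ψ) x := by
  intro ψ
  induction ψ with
  | top => intro x; simp [evalN, mapNCq]
  | shape s => intro x; simpa [evalN, mapNCq] using h s x
  | nid n => intro x; simp [evalN, mapNCq]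
  | lab l => intro x; simp [evalN, mapNCq]
  | neg ψ ih => intro x; simp only [evalN, mapNCq, ih]
  | and ψ₁ ψ₂ ih₁ ih₂ => intro x; simp only [evalN, mapNCq, ih₁, ih₂]
  | geq i p ψ ih => intro x; simp only [evalN, mapNCq, ih]

/-! ### Path lemmas -/

/-- Original paths embed into the extended graph. -/
lemma pathSem_ext_of {p : PathExpr Lab} {n n' : Node} (h : PathSem G p n n') :
    PathSem (extGraph G t) (mapPath Sum.inl p) (some n) (some n') := by
  induction h with
  | @lbl l e a b hs hd hl =>
      simp only [mapPath]
      exact PathSem.lbl (e := Sum.inl e) (by simp [extGraph, hs]) (by simp [extGraph, hd])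
        (by simp only [extGraph, Sum.elim_inl]; exact ⟨l, hl, rfl⟩)
  | inv _ ih => simp only [mapPath]; exact .inv ih
  | seq _ _ ih₁ ih₂ => simp only [mapPath]; exact .seq ih₁ ih₂
  | altL _ ih => simp only [mapPath]; exact .altL ih
  | altR _ ih => simp only [mapPath]; exact .altR ih
  | plusOne _ ih => simp only [mapPath]; exact .plusOne ih
  | plusStep _ _ ih₁ ih₂ => simp only [mapPath] at ih₂ ⊢; exact .plusStep ih₁ ih₂
  | starRefl => simp only [mapPath]; exact .starRefl
  | starPlus _ ih => simp only [mapPath] at ih ⊢; exact .starPlus ih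
  | optRefl => simp only [mapPath]; exact .optRefl
  | optOne _ ih => simp only [mapPath]; exact .optOne ih

/-- Inversion: a path of original labels in the extended graph either stays at
the fresh node or connects two embedded nodes via an original path. -/
lemma pathSem_ext_inv {q : PathExpr (Lab ⊕ Fin m)} {x y : Option Node}
    (h : PathSem (extGraph G t) q x y) :
    ∀ p : PathExpr Lab, mapPath Sum.inl p = q →
      (x = none ∧ y = none) ∨ ∃ n n', x = some n ∧ y = some n' ∧ PathSem G p n n' := by
  induction h with
  | @lbl l e a b hs hd hl =>
      intro p hp
      cases p <;> simp only [mapPath] at hp <;> try (simp at hp; done)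
      rename_i l₀
      injection hp with hl'
      subst hl'
      rcases e with e | j
      · right
        refine ⟨G.src e, G.dst e, hs.symm, hd.symm, PathSem.lbl rfl rfl ?_⟩
        simp only [extGraph, Sum.elim_inl] at hl
        rcases hl with ⟨l₁, hl₁, hl₂⟩
        injection hl₂ with h'
        exact h' ▸ hl₁
      · exfalso
        simp only [extGraph, Sum.elim_inr, Set.mem_singleton_iff] at hl
        exact nomatch hl
  | @inv q₀ a b hq ih =>
      intro p hp
      cases p <;> simp only [mapPath] at hp <;> try (simp at hp; done)
      rename_i p₀
      injection hp with h'
      rcases ih p₀ h' with ⟨h₁, h₂⟩ | ⟨n, n', h₁, h₂, h₃⟩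
      · exact Or.inl ⟨h₂, h₁⟩
      · exact Or.inr ⟨n', n, h₂, h₁, .inv h₃⟩
  | @seq q₁ q₂ a b c h₁ h₂ ih₁ ih₂ =>
      intro p hp
      cases p <;> simp only [mapPath] at hp <;> try (simp at hp; done)
      rename_i p₁ p₂
      injection hp with e₁ e₂
      rcases ih₁ p₁ e₁ with ⟨rfl, rfl⟩ | ⟨n, n', rfl, rfl, hs₁⟩
      · rcases ih₂ p₂ e₂ with ⟨_, rfl⟩ | ⟨n, n', h', _, _⟩
        · exact Or.inl ⟨rfl, rfl⟩
        · exact nomatch h'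
      · rcases ih₂ p₂ e₂ with ⟨h', _⟩ | ⟨n₂, n₂', hb, rfl, hs₂⟩
        · exact nomatch h'
        · injection hb with hb'
          exact Or.inr ⟨n, n₂', rfl, rfl, .seq hs₁ (hb' ▸ hs₂)⟩
  | @altL q₁ q₂ a b h₁ ih =>
      intro p hp
      cases p <;> simp only [mapPath] at hp <;> try (simp at hp; done)
      rename_i p₁ p₂
      injection hp with e₁ e₂
      rcases ih p₁ e₁ with ⟨rfl, rfl⟩ | ⟨n, n', rfl, rfl, hs⟩
      · exact Or.inl ⟨rfl, rfl⟩
      · exact Or.inr ⟨n, n', rfl, rfl, .altL hs⟩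
  | @altR q₁ q₂ a b h₁ ih =>
      intro p hp
      cases p <;> simp only [mapPath] at hp <;> try (simp at hp; done)
      rename_i p₁ p₂
      injection hp with e₁ e₂
      rcases ih p₂ e₂ with ⟨rfl, rfl⟩ | ⟨n, n', rfl, rfl, hs⟩
      · exact Or.inl ⟨rfl, rfl⟩
      · exact Or.inr ⟨n, n', rfl, rfl, .altR hs⟩
  | @plusOne q₀ a b h₁ ih =>
      intro p hp
      cases p <;> simp only [mapPath] at hp <;> try (simp at hp; done)
      rename_i p₀
      injection hp with e₀
      rcases ih p₀ e₀ with ⟨rfl, rfl⟩ | ⟨n, n', rfl, rfl, hs⟩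
      · exact Or.inl ⟨rfl, rfl⟩
      · exact Or.inr ⟨n, n', rfl, rfl, .plusOne hs⟩
  | @plusStep q₀ a b c h₁ h₂ ih₁ ih₂ =>
      intro p hp
      cases p <;> simp only [mapPath] at hp <;> try (simp at hp; done)
      rename_i p₀
      injection hp with e₀
      rcases ih₁ p₀ e₀ with ⟨rfl, rfl⟩ | ⟨n, n', rfl, rfl, hs₁⟩
      · rcases ih₂ (.plus p₀) (by simp only [mapPath, e₀]) with ⟨_, rfl⟩ | ⟨n, n', h', _, _⟩
        · exact Or.inl ⟨rfl, rfl⟩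
        · exact nomatch h'
      · rcases ih₂ (.plus p₀) (by simp only [mapPath, e₀]) with ⟨h', _⟩ | ⟨n₂, n₂', hb, rfl, hs₂⟩
        · exact nomatch h'
        · injection hb with hb'
          exact Or.inr ⟨n, n₂', rfl, rfl, .plusStep hs₁ (hb' ▸ hs₂)⟩
  | @starRefl q₀ a =>
      intro p hp
      cases p <;> simp only [mapPath] at hp <;> try (simp at hp; done)
      rcases a with _ | n
      · exact Or.inl ⟨rfl, rfl⟩
      · exact Or.inr ⟨n, n, rfl, rfl, .starRefl⟩
  | @starPlus q₀ a b h₁ ih =>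
      intro p hp
      cases p <;> simp only [mapPath] at hp <;> try (simp at hp; done)
      rename_i p₀
      injection hp with e₀
      rcases ih (.plus p₀) (by simp only [mapPath, e₀]) with ⟨rfl, rfl⟩ | ⟨n, n', rfl, rfl, hs⟩
      · exact Or.inl ⟨rfl, rfl⟩
      · exact Or.inr ⟨n, n', rfl, rfl, .starPlus hs⟩
  | @optRefl q₀ a =>
      intro p hp
      cases p <;> simp only [mapPath] at hp <;> try (simp at hp; done)
      rcases a with _ | n
      · exact Or.inl ⟨rfl, rfl⟩
      · exact Or.inr ⟨n, n, rfl, rfl, .optRefl⟩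
  | @optOne q₀ a b h₁ ih =>
      intro p hp
      cases p <;> simp only [mapPath] at hp <;> try (simp at hp; done)
      rename_i p₀
      injection hp with e₀
      rcases ih p₀ e₀ with ⟨rfl, rfl⟩ | ⟨n, n', rfl, rfl, hs⟩
      · exact Or.inl ⟨rfl, rfl⟩
      · exact Or.inr ⟨n, n', rfl, rfl, .optOne hs⟩

lemma pathSem_ext_some_iff {p : PathExpr Lab} {n : Node} {y : Option Node} :
    PathSem (extGraph G t) (mapPath Sum.inl p) (some n) y ↔
      ∃ n', y = some n' ∧ PathSem G p n n' := by
  constructor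
  · intro h
    rcases pathSem_ext_inv h p rfl with ⟨h₁, _⟩ | ⟨a, b, ha, hb, hab⟩
    · exact nomatch h₁
    · injection ha with ha'
      exact ⟨b, hb, ha' ▸ hab⟩
  · rintro ⟨n', rfl, h⟩
    exact pathSem_ext_of h

lemma pathSem_ext_none {p : PathExpr Lab} {y : Option Node}
    (h : PathSem (extGraph G t) (mapPath Sum.inl p) none y) : y = none := by
  rcases pathSem_ext_inv h p rfl with ⟨_, h'⟩ | ⟨a, b, ha, _, _⟩
  · exact h'
  · exact nomatch ha

lemma pathSem_lbl_inr {j : Fin m} {x y : Option Node}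
    (h : PathSem (extGraph G t) (.lbl (Sum.inr j)) x y) : x = none ∧ y = some (t j) := by
  cases h with
  | @lbl l e a b hs hd hl =>
      rcases e with e | j'
      · exfalso
        simp only [extGraph, Sum.elim_inl] at hl
        rcases hl with ⟨l₁, _, hl₂⟩
        exact nomatch hl₂
      · simp only [extGraph, Sum.elim_inr, Set.mem_singleton_iff] at hl
        injection hl with hj
        subst hj
        exact ⟨hs.symm, hd.symm⟩

lemma pathSem_lbl_inr_intro (j : Fin m) :
    PathSem (extGraph G t) (.lbl (Sum.inr j)) none (some (t j)) :=
  PathSem.lbl (e := Sum.inr j) rfl rfl rfl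

/-! ### Transport of evaluation to the extended graph -/

/-- Evaluating a transported constraint at an embedded node agrees with
evaluating the original constraint in the original graph. -/
lemma eval_map_some (nlab : Node → Set Lab) (A' : Bool → Option Node → ℚ) :
    ∀ (ψ : NCq Unit Lab Node) (n : Node),
      evalN (extGraph G t) (extNlab nlab m) A' (mapNCq (fun _ => false) some Sum.inl ψ) (some n)
        = evalN G nlab (fun _ n => A' false (some n)) ψ n := by
  intro ψ
  induction ψ with
  | top => intro n; simp [mapNCq, evalN]
  | shape s => intro n; simp [mapNCq, evalN]
  | nid n' => intro n; simp [mapNCq, evalN]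
  | lab l => intro n; simp [mapNCq, evalN, extNlab]
  | neg ψ ih => intro n; simp only [mapNCq, evalN, ih]
  | and ψ₁ ψ₂ ih₁ ih₂ => intro n; simp only [mapNCq, evalN, ih₁, ih₂]
  | geq i p ψ ih =>
      intro n
      have key : ∀ r : ℚ,
          {y | PathSem (extGraph G t) (mapPath Sum.inl p) (some n) y ∧
            evalN (extGraph G t) (extNlab nlab m) A'
              (mapNCq (fun _ => false) some Sum.inl ψ) y = r}
          = some '' {n₂ | PathSem G p n n₂ ∧
              evalN G nlab (fun _ n => A' false (some n)) ψ n₂ = r} := by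
        intro r
        ext y
        simp only [Set.mem_setOf_eq, Set.mem_image]
        constructor
        · rintro ⟨hp, he⟩
          rcases pathSem_ext_some_iff.mp hp with ⟨n', rfl, hn'⟩
          exact ⟨n', ⟨hn', by rw [← ih n']; exact he⟩, rfl⟩
        · rintro ⟨n', ⟨hn', he⟩, rfl⟩
          exact ⟨pathSem_ext_of hn', by rw [ih n']; exact he⟩
      have keyP : {y | PathSem (extGraph G t) (mapPath Sum.inl p) (some n) y}
          = some '' {n₂ | PathSem G p n n₂} := by
        ext y
        simp only [Set.mem_setOf_eq, Set.mem_image]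
        constructor
        · intro hp
          rcases pathSem_ext_some_iff.mp hp with ⟨n', rfl, hn'⟩
          exact ⟨n', hn', rfl⟩
        · rintro ⟨n', hn', rfl⟩
          exact pathSem_ext_of hn'
      simp only [mapNCq, evalN]
      rw [key 1, key 0, keyP,
        Set.ncard_image_of_injective _ (Option.some_injective _),
        Set.ncard_image_of_injective _ (Option.some_injective _),
        Set.ncard_image_of_injective _ (Option.some_injective _)]

lemma eval_extCon_some (nlab : Node → Set Lab) (A' : Bool → Option Node → ℚ)
    (φ : NCq Unit Lab Node) (n : Node) :
    evalN (extGraph G t) (extNlab nlab m) A' (extCon φ m) (some n)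
      = evalN G nlab (fun _ n => A' false (some n)) φ n :=
  eval_map_some nlab A' φ n

/-! ### Evaluation of qualified number restrictions at the fresh node -/

lemma eval_geq_none_reach (nl : Option Node → Set (Lab ⊕ Fin m))
    (A : Bool → Option Node → ℚ) {q : PathExpr (Lab ⊕ Fin m)}
    (hc : PathSem (extGraph G t) q none none)
    (hsub : ∀ y, PathSem (extGraph G t) q none y → y = none)
    {ψ : NCq Bool (Lab ⊕ Fin m) (Option Node)}
    (he : evalN (extGraph G t) nl A ψ none ∈ ({0, 1/2, 1} : Set ℚ)) (i : ℕ) :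
    evalN (extGraph G t) nl A (.geq i q ψ) none
      = if i = 0 then 1 else if i = 1 then evalN (extGraph G t) nl A ψ none else 0 := by
  have hR : {y | PathSem (extGraph G t) q none y} = {none} := by
    apply subset_antisymm
    · intro y hy; exact hsub y hy
    · intro y hy; rw [Set.mem_singleton_iff] at hy; subst hy; exact hc
  have hS : ∀ r : ℚ, {y | PathSem (extGraph G t) q none y ∧ evalN (extGraph G t) nl A ψ y = r}
      = if evalN (extGraph G t) nl A ψ none = r then {none} else ∅ := by
    intro r
    split_ifs with h
    · apply subset_antisymm
      · intro y hy; exact hsub y hy.1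
      · intro y hy; rw [Set.mem_singleton_iff] at hy; subst hy; exact ⟨hc, h⟩
    · apply Set.eq_empty_of_forall_notMem
      rintro y ⟨hy, hy'⟩
      have := hsub y hy
      subst this
      exact h hy'
  simp only [evalN, hR, hS, Set.ncard_singleton]
  rcases mem_T_cases he with h | h | h <;> rw [h] <;>
    rcases i with _ | _ | i <;>
      simp [Set.ncard_singleton]

lemma eval_geq_none_unreach (nl : Option Node → Set (Lab ⊕ Fin m))
    (A : Bool → Option Node → ℚ) {q : PathExpr (Lab ⊕ Fin m)}
    (hc : ∀ y, ¬ PathSem (extGraph G t) q none y)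
    (ψ : NCq Bool (Lab ⊕ Fin m) (Option Node)) (i : ℕ) :
    evalN (extGraph G t) nl A (.geq i q ψ) none = if i = 0 then 1 else 0 := by
  have hR : {y | PathSem (extGraph G t) q none y} = ∅ :=
    Set.eq_empty_of_forall_notMem fun y hy => hc y hy
  have hS : {y | PathSem (extGraph G t) q none y ∧ evalN (extGraph G t) nl A ψ y = 1} = ∅ :=
    Set.eq_empty_of_forall_notMem fun y hy => hc y hy.1
  have hS0 : {y | PathSem (extGraph G t) q none y ∧ evalN (extGraph G t) nl A ψ y = 0} = ∅ :=
    Set.eq_empty_of_forall_notMem fun y hy => hc y hy.1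
  simp only [evalN, hR, hS, hS0, Set.ncard_empty]
  rcases Nat.eq_zero_or_pos i with rfl | hi
  · simp
  · rw [if_neg (by omega), if_pos (by omega), if_neg (by omega : ¬ i = 0)]

/-! ### The basic two-parameter assignment -/

noncomputable def Bfun (a : Node → ℚ) (x : ℚ) : Bool → Option Node → ℚ :=
  fun _ o => o.elim x a

@[simp] lemma Bfun_some (a : Node → ℚ) (x : ℚ) (b : Bool) (n : Node) :
    Bfun a x b (some n) = a n := rfl

@[simp] lemma Bfun_none (a : Node → ℚ) (x : ℚ) (b : Bool) :
    Bfun a x b none = x := rfl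

lemma Bfun_mem_T (a : Node → ℚ) (ha : ∀ n, a n ∈ ({0, 1/2, 1} : Set ℚ))
    {x : ℚ} (hx : x ∈ ({0, 1/2, 1} : Set ℚ)) :
    ∀ (b : Bool) (y : Option Node), Bfun a x b y ∈ ({0, 1/2, 1} : Set ℚ) := by
  rintro b (_ | n)
  · simpa using hx
  · simpa using ha n

/-- Knowledge monotonicity of evaluation at the fresh node in the value of the
assignment at the fresh node. -/
lemma eval_none_mono (nlab : Node → Set Lab) (a : Node → ℚ)
    (ha : ∀ n, a n ∈ ({0, 1/2, 1} : Set ℚ)) (x' : ℚ) (hx' : x' ∈ ({0, 1/2, 1} : Set ℚ)) :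
    ∀ ψ : NCq Unit Lab Node,
      evalN (extGraph G t) (extNlab nlab m) (Bfun a (1/2))
        (mapNCq (fun _ => false) some Sum.inl ψ) none = 1/2 ∨
      evalN (extGraph G t) (extNlab nlab m) (Bfun a (1/2))
        (mapNCq (fun _ => false) some Sum.inl ψ) none =
      evalN (extGraph G t) (extNlab nlab m) (Bfun a x')
        (mapNCq (fun _ => false) some Sum.inl ψ) none := by
  have hB : ∀ (b : Bool) (y : Option Node), Bfun a (1/2) b y ∈ ({0, 1/2, 1} : Set ℚ) :=
    Bfun_mem_T a ha (by norm_num)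
  have hB' : ∀ (b : Bool) (y : Option Node), Bfun a x' b y ∈ ({0, 1/2, 1} : Set ℚ) :=
    Bfun_mem_T a ha hx'
  intro ψ
  induction ψ with
  | top => right; rfl
  | shape s => left; simp [mapNCq, evalN]
  | nid n' => right; rfl
  | lab l => right; rfl
  | neg ψ ih =>
      rcases ih with h | h
      · left; simp only [mapNCq, evalN, h]; norm_num
      · right; simp only [mapNCq, evalN, h]
  | and ψ₁ ψ₂ ih₁ ih₂ =>
      simp only [mapNCq, evalN] at *
      rcases ih₁ with h₁ | h₁ <;> rcases ih₂ with h₂ | h₂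
      · left; rw [h₁, h₂]; norm_num
      · rcases mem_T_cases (evalN_mem_T _ _ _ hB (mapNCq (fun _ => false) some Sum.inl ψ₂) none)
          with h | h | h
        · right
          rw [h₁, h, ← h₂, h]
          rw [min_eq_right (by norm_num : (0:ℚ) ≤ 1/2),
            min_eq_right (T_nonneg (evalN_mem_T _ _ _ hB'
              (mapNCq (fun _ => false) some Sum.inl ψ₁) none))]
        · left; rw [h₁, h]; norm_num
        · left; rw [h₁, h]; norm_num
      · rcases mem_T_cases (evalN_mem_T _ _ _ hB (mapNCq (fun _ => false) some Sum.inl ψ₁) none)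
          with h | h | h
        · right
          rw [h₂, h, ← h₁, h]
          rw [min_eq_left (by norm_num : (0:ℚ) ≤ 1/2),
            min_eq_left (T_nonneg (evalN_mem_T _ _ _ hB'
              (mapNCq (fun _ => false) some Sum.inl ψ₂) none))]
        · left; rw [h₂, h]; norm_num
        · left; rw [h₂, h]; norm_num
      · right; rw [h₁, h₂]
  | geq i p ψ ih =>
      simp only [mapNCq]
      have hsome : ∀ n : Node,
          evalN (extGraph G t) (extNlab nlab m) (Bfun a (1/2))
            (mapNCq (fun _ => false) some Sum.inl ψ) (some n)
          = evalN (extGraph G t) (extNlab nlab m) (Bfun a x')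
            (mapNCq (fun _ => false) some Sum.inl ψ) (some n) := by
        intro n
        rw [eval_map_some, eval_map_some]
        exact evalN_congr _ _ _ _ (fun s x => rfl) ψ n
      by_cases hc : PathSem (extGraph G t) (mapPath Sum.inl p) none none
      · have hsub : ∀ y, PathSem (extGraph G t) (mapPath Sum.inl p) none y → y = none :=
          fun y hy => pathSem_ext_none hy
        rw [eval_geq_none_reach (G := G) (t := t) _ _ hc hsub
            (evalN_mem_T _ _ _ hB _ none) i,
          eval_geq_none_reach (G := G) (t := t) _ _ hc hsub
            (evalN_mem_T _ _ _ hB' _ none) i]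
        by_cases h0 : i = 0
        · right; simp [h0]
        by_cases h1 : i = 1
        · simpa [h0, h1] using ih
        · right; simp [h0, h1]
      · have hc' : ∀ y, ¬ PathSem (extGraph G t) (mapPath Sum.inl p) none y := by
          intro y hy
          have := pathSem_ext_none hy
          subst this
          exact hc hy
        rw [eval_geq_none_unreach (G := G) (t := t) _ _ hc' _ i,
          eval_geq_none_unreach (G := G) (t := t) _ _ hc' _ i]
        right; rfl

/-! ### The conjunction s₀ -/

lemma evalN_foldr_congr {N E L SN : Type*} (G' : PGraph N E L) (nl : N → Set L)
    (A₁ A₂ : SN → N → ℚ) (l : List (NCq SN L N))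
    (h : ∀ ψ ∈ l, ∀ x, evalN G' nl A₁ ψ x = evalN G' nl A₂ ψ x) :
    ∀ x, evalN G' nl A₁ (l.foldr .and .top) x = evalN G' nl A₂ (l.foldr .and .top) x := by
  induction l with
  | nil => intro x; rfl
  | cons a l ih =>
      intro x
      simp only [List.foldr_cons, evalN]
      rw [h a (by simp) x, ih (fun ψ hψ => h ψ (by simp [hψ])) x]

lemma evalN_s0Con_congr (nlab : Node → Set Lab) (φ : NCq Unit Lab Node)
    (A₁ A₂ : Bool → Option Node → ℚ) (h : ∀ x, A₁ false x = A₂ false x) (x : Option Node) :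
    evalN (extGraph G t) (extNlab nlab m) A₁ (s0Con φ m) x
      = evalN (extGraph G t) (extNlab nlab m) A₂ (s0Con φ m) x := by
  apply evalN_foldr_congr
  intro ψ hψ
  rw [List.mem_ofFn] at hψ
  obtain ⟨j, rfl⟩ := hψ
  intro y
  have hext : ∀ z, evalN (extGraph G t) (extNlab nlab m) A₁ (extCon φ m) z
      = evalN (extGraph G t) (extNlab nlab m) A₂ (extCon φ m) z := by
    intro z
    exact evalN_congr_map _ _ (fun _ => false) some Sum.inl A₁ A₂ (fun _ w => h w) φ z
  simp only [evalN, hext]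

lemma evalN_foldr_eq_one {N E L SN : Type*} (G' : PGraph N E L) (nl : N → Set L)
    (A : SN → N → ℚ) (l : List (NCq SN L N)) (x : N)
    (h : ∀ ψ ∈ l, evalN G' nl A ψ x = 1) :
    evalN G' nl A (l.foldr .and .top) x = 1 := by
  induction l with
  | nil => rfl
  | cons a l ih =>
      simp only [List.foldr_cons, evalN]
      rw [h a (by simp), ih (fun ψ hψ => h ψ (by simp [hψ]))]
      norm_num

lemma one_le_of_foldr {N E L SN : Type*} {G' : PGraph N E L} {nl : N → Set L}
    {A : SN → N → ℚ} {l : List (NCq SN L N)} {x : N}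
    (h : 1 ≤ evalN G' nl A (l.foldr .and .top) x) :
    ∀ ψ ∈ l, 1 ≤ evalN G' nl A ψ x := by
  induction l with
  | nil => intro ψ hψ; simp at hψ
  | cons a l ih =>
      intro ψ hψ
      simp only [List.foldr_cons, evalN, le_min_iff] at h
      rcases List.mem_cons.mp hψ with rfl | hψ'
      · exact h.1
      · exact ih h.2 ψ hψ'

end Aux


/-- the single-target reduction preserves validity for node
targets.  G conforms to the single shape s = ⟨(), φ, targets t₁ … t_m⟩ (i.e.
some strictly faithful three-valued assignment assigns s to all targets) iff
the extended graph G' conforms to {s with target ⊥, s₀} where s₀'s only target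
is the fresh node `none`. -/
theorem single_target_reduction {Node Edge Lab : Type*}
    (G : PGraph Node Edge Lab) (nlab : Node → Set Lab)
    (φ : NCq Unit Lab Node) (m : ℕ) (t : Fin m → Node) :
    (∃ A : Unit → Node → ℚ,
      (∀ u n, A u n ∈ ({0, 1/2, 1} : Set ℚ)) ∧
      (∀ u n, A u n = evalN G nlab A φ n) ∧
      (∀ j : Fin m, A () (t j) = 1)) ↔
    (∃ A' : Bool → Option Node → ℚ,
      (∀ b x, A' b x ∈ ({0, 1/2, 1} : Set ℚ)) ∧
      (∀ b x, A' b x = evalN (extGraph G t) (extNlab nlab m) A' (extShapes φ m b) x) ∧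
      A' true none = 1) := by
  constructor
  · rintro ⟨A, hT, hfix, htgt⟩
    have ha : ∀ n, A () n ∈ ({0, 1/2, 1} : Set ℚ) := fun n => hT () n
    have hAfix' : ∀ n, evalN G nlab (fun _ => A ()) φ n = A () n := by
      intro n
      rw [← hfix () n]
    set c := evalN (extGraph G t) (extNlab nlab m) (Bfun (A ()) (1/2))
      (mapNCq (fun _ => false) some Sum.inl φ) none with hc
    have hcT : c ∈ ({0, 1/2, 1} : Set ℚ) :=
      evalN_mem_T _ _ _ (Bfun_mem_T _ ha (by norm_num)) _ _
    set d := if c = 1/2 then 1/2 else c with hd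
    have hdT : d ∈ ({0, 1/2, 1} : Set ℚ) := by
      rw [hd]; split_ifs
      · norm_num
      · exact hcT
    have hkey : evalN (extGraph G t) (extNlab nlab m) (Bfun (A ()) d)
        (mapNCq (fun _ => false) some Sum.inl φ) none = d := by
      by_cases h : c = 1/2
      · rw [hd, if_pos h, ← hc]
        exact h
      · rw [hd, if_neg h]
        rcases eval_none_mono (G := G) (t := t) nlab (A ()) ha c hcT φ with h' | h'
        · exact absurd (hc.trans h') h
        · rw [← h', ← hc]
    set A' : Bool → Option Node → ℚ := fun b x =>
      if b then evalN (extGraph G t) (extNlab nlab m) (Bfun (A ()) d) (s0Con φ m) x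
      else Bfun (A ()) d false x with hA'
    have hA'f : ∀ x, A' false x = Bfun (A ()) d false x := fun x => by simp [hA']
    have hA't : ∀ x, A' true x
        = evalN (extGraph G t) (extNlab nlab m) (Bfun (A ()) d) (s0Con φ m) x :=
      fun x => by simp [hA']
    have hBT : ∀ (b : Bool) (y : Option Node), Bfun (A ()) d b y ∈ ({0, 1/2, 1} : Set ℚ) :=
      Bfun_mem_T _ ha hdT
    have hsome : ∀ n, evalN G nlab (fun _ n => Bfun (A ()) d false (some n)) φ n = A () n := by
      intro n
      rw [← hAfix' n]
      exact evalN_congr G nlab _ _ (fun s x => rfl) φ n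
    refine ⟨A', ?_, ?_, ?_⟩
    · intro b x
      cases b
      · rw [hA'f]; exact hBT _ _
      · rw [hA't]; exact evalN_mem_T _ _ _ hBT _ _
    · intro b x
      have hshape : ∀ y, evalN (extGraph G t) (extNlab nlab m) A' (extCon φ m) y
          = evalN (extGraph G t) (extNlab nlab m) (Bfun (A ()) d) (extCon φ m) y := by
        intro y
        exact evalN_congr_map _ _ (fun _ => false) some Sum.inl A' _
          (fun _ w => hA'f w) φ y
      cases b
      · have hfalse : extShapes φ m false = extCon φ m := by simp [extShapes]
        rw [hfalse, hshape x, hA'f]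
        cases x with
        | none =>
            show d = _
            exact hkey.symm
        | some n =>
            rw [eval_extCon_some, hsome n]
            rfl
      · have htrue : extShapes φ m true = s0Con φ m := by simp [extShapes]
        rw [htrue, hA't x]
        exact evalN_s0Con_congr nlab φ _ _ (fun y => (hA'f y).symm) x
    · rw [hA't]
      show evalN _ _ _ ((List.ofFn fun j : Fin m =>
        NCq.geq 1 (PathExpr.lbl (Sum.inr j)) (extCon φ m)).foldr NCq.and NCq.top) none = 1
      apply evalN_foldr_eq_one
      intro ψ hψ
      rw [List.mem_ofFn] at hψ
      obtain ⟨j, rfl⟩ := hψ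
      have hset : {y | PathSem (extGraph G t) (.lbl (Sum.inr j)) none y ∧
          evalN (extGraph G t) (extNlab nlab m) (Bfun (A ()) d) (extCon φ m) y = 1}
          = {some (t j)} := by
        apply subset_antisymm
        · intro y hy
          exact (pathSem_lbl_inr hy.1).2
        · intro y hy
          rw [Set.mem_singleton_iff] at hy
          subst hy
          refine ⟨pathSem_lbl_inr_intro j, ?_⟩
          rw [eval_extCon_some, hsome (t j)]
          exact htgt j
      simp only [evalN, hset, Set.ncard_singleton]
      norm_num
  · rintro ⟨A', hT', hfix', h1⟩
    have hfa : ∀ n, A' false (some n)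
        = evalN G nlab (fun _ n => A' false (some n)) φ n := by
      intro n
      have h2 := hfix' false (some n)
      have hfalse : extShapes φ m false = extCon φ m := by simp [extShapes]
      rw [h2, hfalse, eval_extCon_some]
    refine ⟨fun _ n => A' false (some n), fun u n => hT' false (some n),
      fun u n => hfa n, ?_⟩
    intro j
    have h2 := hfix' true none
    have htrue : extShapes φ m true = s0Con φ m := by simp [extShapes]
    have h3 : evalN (extGraph G t) (extNlab nlab m) A' (s0Con φ m) none = 1 := by
      rw [← htrue, ← h2]; exact h1
    have h4 := one_le_of_foldr (l := List.ofFn fun j : Fin m =>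
        NCq.geq 1 (PathExpr.lbl (Sum.inr j)) (extCon φ m))
      (by rw [show ((List.ofFn fun j : Fin m =>
          NCq.geq 1 (PathExpr.lbl (Sum.inr j)) (extCon φ m)).foldr NCq.and NCq.top)
          = s0Con φ m from rfl, h3])
      (NCq.geq 1 (PathExpr.lbl (Sum.inr j)) (extCon φ m))
      (by rw [List.mem_ofFn]; exact ⟨j, rfl⟩)
    simp only [evalN] at h4
    split_ifs at h4 with hcond hcond2
    · have hne : {y | PathSem (extGraph G t) (.lbl (Sum.inr j)) none y ∧
          evalN (extGraph G t) (extNlab nlab m) A' (extCon φ m) y = 1}.Nonempty := by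
        apply Set.nonempty_of_ncard_ne_zero
        omega
      obtain ⟨y, hp, he⟩ := hne
      have hy := (pathSem_lbl_inr hp).2
      subst hy
      rw [eval_extCon_some] at he
      show A' false (some (t j)) = 1
      rw [hfa (t j)]
      exact he
    · norm_num at h4
    · norm_num at h4
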